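/- Let f : P → P be the map on the open interval (1, p) in the positive braid monoid (prefix order) given by q ↦ q ∧ Δ, where q ∧ Δ is the greatest lower bound of q and Δ. If p ∈ B_n^+ with p ≰ Δ, then for every q ∈ (1, p): (a) f(q) ∈ (1, p), i.e., 1 < q ∧ Δ < p; (b) f(q) ≤ q; and (c) f(q) ≤ p ∧ Δ, with p ∧ Δ ∈ (1, p). -/

import Mathlib

/-- The defining relations of the braid group `B_n` on generators `s_0, …, s_{n-2}`
(0-indexed versions of the standard generators `s_1, …, s_{n-1}`). -/
def braidRels (n : ℕ) : Set (FreeGroup (Fin (n - 1))) :=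
  {r | (∃ i j : Fin (n - 1), (i : ℕ) + 1 = (j : ℕ) ∧
          r = FreeGroup.of i * FreeGroup.of j * FreeGroup.of i *
              (FreeGroup.of j * FreeGroup.of i * FreeGroup.of j)⁻¹) ∨
       (∃ i j : Fin (n - 1), (i : ℕ) + 1 < (j : ℕ) ∧
          r = FreeGroup.of i * FreeGroup.of j * (FreeGroup.of j * FreeGroup.of i)⁻¹)}

/-- The braid group `B_n`, given by the standard presentation. -/
abbrev BraidGroup (n : ℕ) := PresentedGroup (braidRels n)

/-- The standard generator `s_{i+1}` (1-indexed) of `B_n`. -/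
def sgen (n : ℕ) (i : Fin (n - 1)) : BraidGroup n := PresentedGroup.of i

/-- The positive braid monoid `B_n^+`: the submonoid generated by the standard generators. -/
def posMonoid (n : ℕ) : Submonoid (BraidGroup n) := Submonoid.closure (Set.range (sgen n))

/-- The prefix order on `B_n` : `x ≤ y` iff `x⁻¹ * y` is a positive braid. -/
def braidLe (n : ℕ) (x y : BraidGroup n) : Prop := x⁻¹ * y ∈ posMonoid n

/-- The standard generator of `B_n` indexed by a natural number (`s_{i+1}` in 1-indexed
notation), or `1` if the index is out of range. -/
def sgen' (n : ℕ) (i : ℕ) : BraidGroup n :=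
  if h : i < n - 1 then sgen n ⟨i, h⟩ else 1

/-- The half twist `Δ = (s_1 ⋯ s_{n-1})(s_1 ⋯ s_{n-2}) ⋯ (s_1 s_2)(s_1)` in `B_n`. -/
def halfTwist (n : ℕ) : BraidGroup n :=
  (((List.range (n - 1)).reverse).map
    (fun m => ((List.range (m + 1)).map (sgen' n)).prod)).prod

/-- Strict prefix order: `x < y`. -/
def braidLt (n : ℕ) (x y : BraidGroup n) : Prop := braidLe n x y ∧ x ≠ y

/-- `m` is the greatest lower bound (meet) `a ∧ b` of `a` and `b` in the prefix order. -/
def isMeet (n : ℕ) (a b m : BraidGroup n) : Prop :=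
  braidLe n m a ∧ braidLe n m b ∧ ∀ r : BraidGroup n, braidLe n r a → braidLe n r b → braidLe n r m

/- ===== auxiliary development ===== -/

lemma rel_one {n : ℕ} {r : FreeGroup (Fin (n-1))} (hr : r ∈ braidRels n) :
    PresentedGroup.mk (braidRels n) r = 1 :=
  (QuotientGroup.eq_one_iff _).2 (Subgroup.subset_normalClosure hr)

lemma braid_rel {n : ℕ} (i j : Fin (n-1)) (h : (i:ℕ) + 1 = j) :
    sgen n i * sgen n j * sgen n i = sgen n j * sgen n i * sgen n j := by
  have hr := rel_one (n := n) (Or.inl ⟨i, j, h, rfl⟩)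
  simp only [map_mul, map_inv, mul_inv_eq_one] at hr
  exact hr

lemma comm_rel {n : ℕ} (i j : Fin (n-1)) (h : (i:ℕ) + 1 < j) :
    sgen n i * sgen n j = sgen n j * sgen n i := by
  have hr := rel_one (n := n) (Or.inr ⟨i, j, h, rfl⟩)
  simp only [map_mul, map_inv, mul_inv_eq_one] at hr
  exact hr

lemma braid_rel' {n : ℕ} (j : ℕ) (h : j + 1 < n - 1) :
    sgen' n j * sgen' n (j+1) * sgen' n j = sgen' n (j+1) * sgen' n j * sgen' n (j+1) := by
  have h1 : j < n - 1 := Nat.lt_of_succ_lt h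
  simp only [sgen', dif_pos h, dif_pos h1]
  exact braid_rel ⟨j, h1⟩ ⟨j+1, h⟩ rfl

lemma comm_rel' {n : ℕ} (j k : ℕ) (hjk : j + 2 ≤ k) (hk : k < n - 1) :
    sgen' n j * sgen' n k = sgen' n k * sgen' n j := by
  have h1 : j < n - 1 := by omega
  simp only [sgen', dif_pos h1, dif_pos hk]
  exact comm_rel ⟨j, h1⟩ ⟨k, hk⟩ (by simp only [Fin.val_mk]; omega)

/-- `Dw n m = s_0 s_1 ⋯ s_{m-1}` (0-indexed). -/
def Dw (n m : ℕ) : BraidGroup n := ((List.range m).map (sgen' n)).prod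

/-- `Tw n m = D_m D_{m-1} ⋯ D_1`. -/
def Tw (n m : ℕ) : BraidGroup n := (((List.range m).reverse).map (fun k => Dw n (k+1))).prod

lemma halfTwist_eq (n : ℕ) : halfTwist n = Tw n (n-1) := rfl

lemma Dw_succ (n m : ℕ) : Dw n (m+1) = Dw n m * sgen' n m := by
  simp [Dw, List.range_succ]

lemma Tw_succ (n m : ℕ) : Tw n (m+1) = Dw n (m+1) * Tw n m := by
  simp [Tw, List.range_succ]

lemma sgen'_mem (n i : ℕ) : sgen' n i ∈ posMonoid n := by
  unfold sgen'
  split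
  · exact Submonoid.subset_closure ⟨_, rfl⟩
  · exact one_mem _

lemma Dw_mem (n m : ℕ) : Dw n m ∈ posMonoid n := by
  refine Submonoid.list_prod_mem _ ?_
  intro x hx
  simp only [List.mem_map] at hx
  obtain ⟨i, _, rfl⟩ := hx
  exact sgen'_mem n i

lemma Tw_mem (n m : ℕ) : Tw n m ∈ posMonoid n := by
  refine Submonoid.list_prod_mem _ ?_
  intro x hx
  simp only [List.mem_map] at hx
  obtain ⟨i, _, rfl⟩ := hx
  exact Dw_mem n _

/-- a generator with index `≥ m+1` commutes with `Dw n m`. -/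
lemma comm_Dw {n : ℕ} (k : ℕ) (hk : k < n - 1) :
    ∀ m, m + 1 ≤ k → sgen' n k * Dw n m = Dw n m * sgen' n k := by
  intro m
  induction m with
  | zero => intro _; simp [Dw]
  | succ m ih =>
      intro h
      rw [Dw_succ, ← mul_assoc, ih (by omega), mul_assoc,
        ← comm_rel' m k (by omega) hk, mul_assoc]

/-- key relation: `s_i ⬝ D_m = D_m ⬝ s_{i-1}` for `1 ≤ i < m ≤ n-1`. -/
lemma key_rel {n : ℕ} (i : ℕ) (hi : 1 ≤ i) :
    ∀ m, i < m → m ≤ n - 1 → sgen' n i * Dw n m = Dw n m * sgen' n (i-1) := by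
  intro m
  induction m with
  | zero => omega
  | succ m ih =>
      intro him hm
      rcases Nat.lt_or_ge i m with h | h
      · rw [Dw_succ, ← mul_assoc, ih h (by omega), mul_assoc,
          comm_rel' (i-1) m (by omega) (by omega), ← mul_assoc]
      · have hi' : i = m := by omega
        subst hi'
        obtain ⟨m', rfl⟩ : ∃ m', i = m' + 1 := ⟨i - 1, by omega⟩
        rw [Dw_succ, Dw_succ]
        have hc : sgen' n (m'+1) * Dw n m' = Dw n m' * sgen' n (m'+1) :=
          comm_Dw (m'+1) (by omega) m' (by omega)
        have hb : sgen' n (m'+1) * sgen' n m' * sgen' n (m'+1)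
            = sgen' n m' * sgen' n (m'+1) * sgen' n m' := (braid_rel' m' (by omega)).symm
        calc sgen' n (m'+1) * (Dw n m' * sgen' n m' * sgen' n (m'+1))
            = (sgen' n (m'+1) * Dw n m') * (sgen' n m' * sgen' n (m'+1)) := by
              simp [mul_assoc]
          _ = Dw n m' * (sgen' n (m'+1) * sgen' n m' * sgen' n (m'+1)) := by
              rw [hc]; simp [mul_assoc]
          _ = Dw n m' * (sgen' n m' * sgen' n (m'+1) * sgen' n m') := by rw [hb]
          _ = Dw n m' * sgen' n m' * sgen' n (m'+1) * sgen' n (m'+1-1) := by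
              simp [mul_assoc]

/-- every generator with index `< m` is a prefix of `Tw n m`. -/
lemma gen_prefix_Tw {n : ℕ} :
    ∀ m, m ≤ n - 1 → ∀ i, i < m → ∃ w ∈ posMonoid n, Tw n m = sgen' n i * w := by
  intro m
  induction m with
  | zero => omega
  | succ m ih =>
      intro hm i hi
      rcases Nat.eq_zero_or_pos i with rfl | hpos
      · refine ⟨((List.range m).map (fun j => sgen' n (j+1))).prod * Tw n m, ?_, ?_⟩
        · refine mul_mem (Submonoid.list_prod_mem _ ?_) (Tw_mem n m)
          intro x hx
          simp only [List.mem_map] at hx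
          obtain ⟨j, _, rfl⟩ := hx
          exact sgen'_mem n _
        · rw [Tw_succ]
          have hD : Dw n (m+1)
              = sgen' n 0 * ((List.range m).map (fun j => sgen' n (j+1))).prod := by
            simp [Dw, List.range_succ_eq_map, Function.comp_def, Nat.succ_eq_add_one]
          rw [hD, mul_assoc]
      · obtain ⟨w, hw, hTw⟩ := ih (by omega) (i-1) (by omega)
        refine ⟨Dw n (m+1) * w, mul_mem (Dw_mem n _) hw, ?_⟩
        rw [Tw_succ, hTw, ← mul_assoc, ← key_rel i hpos (m+1) hi hm, mul_assoc]

/-- exponent-sum homomorphism. -/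
def expSum (n : ℕ) : BraidGroup n →* Multiplicative ℤ :=
  PresentedGroup.toGroup (f := fun _ => Multiplicative.ofAdd (1:ℤ)) (by
    intro r hr
    rcases hr with ⟨i, j, _, rfl⟩ | ⟨i, j, _, rfl⟩ <;>
      · simp only [map_mul, map_inv, FreeGroup.lift_apply_of]
        group)

lemma expSum_sgen {n : ℕ} (i : Fin (n-1)) :
    expSum n (sgen n i) = Multiplicative.ofAdd (1:ℤ) := by
  simpa [sgen, expSum] using PresentedGroup.toGroup.of
    (f := fun _ : Fin (n-1) => Multiplicative.ofAdd (1:ℤ)) (rels := braidRels n)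
    (by intro r hr
        rcases hr with ⟨i, j, _, rfl⟩ | ⟨i, j, _, rfl⟩ <;>
          · simp only [map_mul, map_inv, FreeGroup.lift_apply_of]
            group) (x := i)

lemma expSum_nonneg {n : ℕ} {x : BraidGroup n} (hx : x ∈ posMonoid n) :
    0 ≤ Multiplicative.toAdd (expSum n x) := by
  induction hx using Submonoid.closure_induction with
  | mem x hx =>
      obtain ⟨i, rfl⟩ := hx
      rw [expSum_sgen]
      norm_num
  | one => simp
  | mul x y _ _ hx hy => rw [map_mul, toAdd_mul]; omega

/-- a nontrivial positive braid begins with some generator. -/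
lemma first_letter {n : ℕ} {x : BraidGroup n} (hx : x ∈ posMonoid n) (hx1 : x ≠ 1) :
    ∃ i : Fin (n-1), ∃ w ∈ posMonoid n, x = sgen n i * w := by
  obtain ⟨l, hl, hprod⟩ := Submonoid.exists_list_of_mem_closure hx
  cases l with
  | nil => exact absurd hprod.symm hx1
  | cons y t =>
      obtain ⟨i, rfl⟩ := hl y List.mem_cons_self
      refine ⟨i, t.prod, ?_, ?_⟩
      · exact Submonoid.list_prod_mem _ fun z hz =>
          Submonoid.subset_closure (hl z (List.mem_cons_of_mem _ hz))
      · rw [← hprod, List.prod_cons]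

lemma gen_le_halfTwist {n : ℕ} (i : Fin (n-1)) :
    braidLe n (sgen n i) (halfTwist n) := by
  obtain ⟨w, hw, hTw⟩ := gen_prefix_Tw (n := n) (n-1) le_rfl i i.isLt
  have hsi : sgen' n (i : ℕ) = sgen n i := by
    simp [sgen', dif_pos i.isLt]
  rw [braidLe, halfTwist_eq, hTw, hsi, inv_mul_cancel_left]
  exact hw

lemma braidLe_trans {n : ℕ} {x y z : BraidGroup n}
    (h1 : braidLe n x y) (h2 : braidLe n y z) : braidLe n x z := by
  have := mul_mem h1 h2
  rwa [mul_assoc, mul_inv_cancel_left] at this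

lemma braidLe_one_iff {n : ℕ} {x : BraidGroup n} : braidLe n 1 x ↔ x ∈ posMonoid n := by
  simp [braidLe]

lemma halfTwist_mem (n : ℕ) : halfTwist n ∈ posMonoid n := by
  rw [halfTwist_eq]; exact Tw_mem n _

/-- key Garside fact: the meet with Δ of a nontrivial positive braid is nontrivial. -/
lemma meet_ne_one {n : ℕ} {x m : BraidGroup n} (hx : x ∈ posMonoid n) (hx1 : x ≠ 1)
    (hm : isMeet n x (halfTwist n) m) : m ≠ 1 := by
  obtain ⟨i, w, hw, hxw⟩ := first_letter hx hx1
  have h1 : braidLe n (sgen n i) x := by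
    rw [braidLe, hxw, inv_mul_cancel_left]; exact hw
  have h2 : braidLe n (sgen n i) m := hm.2.2 _ h1 (gen_le_halfTwist i)
  intro hm1
  rw [hm1] at h2
  have h3 : (sgen n i)⁻¹ ∈ posMonoid n := by simpa [braidLe] using h2
  have := expSum_nonneg h3
  rw [map_inv, toAdd_inv, expSum_sgen] at this
  simp at this

/-- let `p ∈ B_n^+` with `p ≰ Δ`, and let `q` lie in the open interval
`(1, p)` of the prefix order. Let `mq = q ∧ Δ` and `mp = p ∧ Δ` be the Garside meets
with the half twist. Then (a) `1 < q ∧ Δ < p`; (b) `q ∧ Δ ≤ q`; and (c) `q ∧ Δ ≤ p ∧ Δ`,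
with `p ∧ Δ ∈ (1, p)`. -/
theorem garside_meet_contraction (n : ℕ) (p : BraidGroup n)
    (hp : p ∈ posMonoid n) (hpΔ : ¬ braidLe n p (halfTwist n))
    (q : BraidGroup n) (hq : braidLt n 1 q ∧ braidLt n q p)
    (mq : BraidGroup n) (hmq : isMeet n q (halfTwist n) mq)
    (mp : BraidGroup n) (hmp : isMeet n p (halfTwist n) mp) :
    (braidLt n 1 mq ∧ braidLt n mq p) ∧
    braidLe n mq q ∧
    (braidLe n mq mp ∧ braidLt n 1 mp ∧ braidLt n mp p) := by
  obtain ⟨⟨hq1, hq1'⟩, ⟨hqp, hqp'⟩⟩ := hq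
  have hqpos : q ∈ posMonoid n := braidLe_one_iff.1 hq1
  have hΔ1 : braidLe n 1 (halfTwist n) := braidLe_one_iff.2 (halfTwist_mem n)
  have hp1 : braidLe n 1 p := braidLe_one_iff.2 hp
  have hpne1 : p ≠ 1 := by
    rintro rfl; exact hpΔ hΔ1
  -- facts about mq
  have hmq1 : braidLe n 1 mq := hmq.2.2 1 hq1 hΔ1
  have hmqne1 : mq ≠ 1 := meet_ne_one hqpos (Ne.symm hq1') hmq
  have hmqq : braidLe n mq q := hmq.1
  have hmqp : braidLe n mq p := braidLe_trans hmqq hqp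
  have hmqnep : mq ≠ p := by
    rintro rfl; exact hpΔ hmq.2.1
  -- facts about mp
  have hmp1 : braidLe n 1 mp := hmp.2.2 1 hp1 hΔ1
  have hmpne1 : mp ≠ 1 := meet_ne_one hp hpne1 hmp
  have hmpp : braidLe n mp p := hmp.1
  have hmpnep : mp ≠ p := by
    rintro rfl; exact hpΔ hmp.2.1
  have hmqmp : braidLe n mq mp := hmp.2.2 _ hmqp hmq.2.1
  exact ⟨⟨⟨hmq1, Ne.symm hmqne1⟩, ⟨hmqp, hmqnep⟩⟩, hmqq,
    ⟨hmqmp, ⟨hmp1, Ne.symm hmpne1⟩, ⟨hmpp, hmpnep⟩⟩⟩
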